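/- For any integers c_1, …, c_k (k ≥ 1), the matrix product σ_{1,q}^{−c_1}S_q·σ_{1,q}^{−c_2}S_q·⋯·σ_{1,q}^{−c_k}S_q in GL_2(ℚ(q)) equals the matrix whose first row is (E^♯_k(c_1,…,c_k)_q, −q^{c_k−1}·E^♯_{k−1}(c_1,…,c_{k−1})_q) and whose second row is (E^♯_{k−1}(c_2,…,c_k)_q, −q^{c_k−1}·E^♯_{k−2}(c_2,…,c_{k−1})_q). -/

import Mathlib

noncomputable section

/-- The field ℚ(q) of rational functions over ℚ. -/
abbrev K : Type := RatFunc ℚ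

/-- The variable q. -/
def q : K := RatFunc.X

/-- Right q-integer `[n]^♯` with deformation parameter `x`. -/
def qsX (x : K) (n : ℤ) : K := (1 - x ^ n) / (1 - x)

/-- Left q-integer `[n]^♭` with deformation parameter `x`. -/
def qfX (x : K) (n : ℤ) : K := (1 - x ^ (n - 1) + x ^ n - x ^ (n + 1)) / (1 - x)

/-- Right q-integer `[n]^♯_q`. -/
def qs (n : ℤ) : K := qsX q n

/-- Left q-integer `[n]^♭_q`. -/
def qf (n : ℤ) : K := qfX q n

/-- Right q-deformed Euler continuant `E^♯` (first-row expansion of the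
tridiagonal determinant), with parameter `x`. -/
def EsharpX (x : K) : List ℤ → K
  | [] => 1
  | [c] => qsX x c
  | c :: d :: rest => qsX x c * EsharpX x (d :: rest) - x ^ (c - 1) * EsharpX x rest

/-- Left q-deformed Euler continuant `E^♭` (first-row expansion of the
tridiagonal determinant whose (k,k) entry is the left q-integer), with parameter `x`. -/
def EflatX (x : K) : List ℤ → K
  | [] => 1
  | [c] => qfX x c
  | c :: d :: rest => qsX x c * EflatX x (d :: rest) - x ^ (c - 1) * EflatX x rest

def Esharp (L : List ℤ) : K := EsharpX q L

def Eflat (L : List ℤ) : K := EflatX q L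

/-- `E^♯_{j-1}(d_2,…,d_j)` for the input list `(d_1,…,d_j)`, with the
convention `E^♯_{-1}() = 0` when the list is empty. -/
def EsharpD : List ℤ → K
  | [] => 0
  | _ :: rest => Esharp rest

/-- `E^♭_{j-1}(d_2,…,d_j)` for the input list `(d_1,…,d_j)`, with the
convention `E^♭_{-1}() = 1 - q` when the list is empty. -/
def EflatD : List ℤ → K
  | [] => 1 - q
  | _ :: rest => Eflat rest

/-- Left q-deformed negative continued fraction `[[c_1,…,c_k]]^♭_q`. -/
def nflat : List ℤ → K
  | [] => 0
  | [c] => qf c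
  | c :: d :: rest => qs c - q ^ (c - 1) / nflat (d :: rest)

/-- Right q-deformed negative continued fraction `[[c_1,…,c_k]]^♯_q`. -/
def nsharp : List ℤ → K
  | [] => 0
  | [c] => qs c
  | c :: d :: rest => qs c - q ^ (c - 1) / nsharp (d :: rest)

/-- Left q-deformed regular continued fraction, with alternating parameter `x`, `x⁻¹`. -/
def regFlatX : K → List ℤ → K
  | _, [] => 0
  | x, [a] => qfX x a
  | x, a :: d :: rest => qsX x a + x ^ a / regFlatX x⁻¹ (d :: rest)

/-- Left q-deformed regular continued fraction `[a_1,…,a_{2m}]^♭_q`. -/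
def regFlat (L : List ℤ) : K := regFlatX q L

/-- Classical negative continued fraction `[[c_1,…,c_k]] ∈ ℚ`. -/
def negCF : List ℤ → ℚ
  | [] => 0
  | [c] => c
  | c :: d :: rest => c - 1 / negCF (d :: rest)

/-- Classical regular continued fraction `[a_1,…,a_{2m}] ∈ ℚ`. -/
def regCF : List ℤ → ℚ
  | [] => 0
  | [a] => a
  | a :: d :: rest => a + 1 / regCF (d :: rest)

/-- The matrix σ_{1,q} as an invertible 2×2 matrix over ℚ(q). -/
def σ1 : (Matrix (Fin 2) (Fin 2) K)ˣ where
  val := !![q⁻¹, -q⁻¹; 0, 1]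
  inv := !![q, 1; 0, 1]
  val_inv := by
    have hq : (q : K) ≠ 0 := RatFunc.X_ne_zero
    ext i j
    fin_cases i <;> fin_cases j <;>
      simp [Matrix.mul_apply, Fin.sum_univ_two, inv_mul_cancel₀ hq]
  inv_val := by
    have hq : (q : K) ≠ 0 := RatFunc.X_ne_zero
    ext i j
    fin_cases i <;> fin_cases j <;>
      simp [Matrix.mul_apply, Fin.sum_univ_two, mul_inv_cancel₀ hq]

/-- The matrix σ_{2,q} as an invertible 2×2 matrix over ℚ(q). -/
def σ2 : (Matrix (Fin 2) (Fin 2) K)ˣ where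
  val := !![1, 0; 1, q⁻¹]
  inv := !![1, 0; -q, q]
  val_inv := by
    have hq : (q : K) ≠ 0 := RatFunc.X_ne_zero
    ext i j
    fin_cases i <;> fin_cases j <;>
      simp [Matrix.mul_apply, Fin.sum_univ_two, inv_mul_cancel₀ hq]
  inv_val := by
    have hq : (q : K) ≠ 0 := RatFunc.X_ne_zero
    ext i j
    fin_cases i <;> fin_cases j <;>
      simp [Matrix.mul_apply, Fin.sum_univ_two, mul_inv_cancel₀ hq]

/-- The matrix S_q as an invertible 2×2 matrix over ℚ(q). -/
def Sq : (Matrix (Fin 2) (Fin 2) K)ˣ where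
  val := !![0, -q⁻¹; 1, 0]
  inv := !![0, 1; -q, 0]
  val_inv := by
    have hq : (q : K) ≠ 0 := RatFunc.X_ne_zero
    ext i j
    fin_cases i <;> fin_cases j <;>
      simp [Matrix.mul_apply, Fin.sum_univ_two, inv_mul_cancel₀ hq]
  inv_val := by
    have hq : (q : K) ≠ 0 := RatFunc.X_ne_zero
    ext i j
    fin_cases i <;> fin_cases j <;>
      simp [Matrix.mul_apply, Fin.sum_univ_two, mul_inv_cancel₀ hq]

/-- The product σ_{1,q}^{-c_1}·S_q·σ_{1,q}^{-c_2}·S_q⋯σ_{1,q}^{-c_k}·S_q. -/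
def prodCS : List ℤ → (Matrix (Fin 2) (Fin 2) K)ˣ
  | [] => 1
  | c :: rest => σ1 ^ (-c) * Sq * prodCS rest

/-- The product σ_{1,q}^{-a_1}·σ_{2,q}^{a_2}⋯σ_{1,q}^{-a_{2m-1}}·σ_{2,q}^{a_{2m}}. -/
def prodReg : List ℤ → (Matrix (Fin 2) (Fin 2) K)ˣ
  | [] => 1
  | [a] => σ1 ^ (-a)
  | a :: b :: rest => σ1 ^ (-a) * σ2 ^ b * prodReg rest

/-- The sum a_2 + a_4 + ⋯ of the even-indexed entries. -/
def evenSum : List ℤ → ℤ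
  | [] => 0
  | [_] => 0
  | _ :: b :: rest => b + evenSum rest

/-- Möbius action of a 2×2 matrix on ℚ(q). -/
def mobius (A : Matrix (Fin 2) (Fin 2) K) (x : K) : K :=
  (A 0 0 * x + A 0 1) / (A 1 0 * x + A 1 1)


/-! Auxiliary lemmas for `prodCS_entries`. -/

lemma aux_hq0 : (q : K) ≠ 0 := RatFunc.X_ne_zero

lemma aux_hq1 : (1 : K) - q ≠ 0 := by
  rw [sub_ne_zero]
  intro h
  have h2 : (algebraMap (Polynomial ℚ) K) 1 = (algebraMap (Polynomial ℚ) K) Polynomial.X := by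
    simpa [q, RatFunc.algebraMap_X] using h
  have h3 : (Polynomial.X : Polynomial ℚ) = Polynomial.C 1 := by
    simpa using (RatFunc.algebraMap_injective ℚ h2).symm
  exact Polynomial.X_ne_C 1 h3

lemma aux_sigma1_zpow (n : ℤ) :
    ((σ1 ^ (-n) : (Matrix (Fin 2) (Fin 2) K)ˣ) : Matrix (Fin 2) (Fin 2) K)
      = !![q ^ n, qsX q n; 0, 1] := by
  induction n using Int.induction_on with
  | zero => simp [qsX, Matrix.one_fin_two]
  | succ m ih =>
      have e : σ1 ^ (-((m : ℤ) + 1)) = σ1 ^ (-(m : ℤ)) * σ1⁻¹ := by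
        rw [← zpow_sub_one]; ring_nf
      rw [e, Units.val_mul, ih]
      have hval : ((σ1⁻¹ : (Matrix (Fin 2) (Fin 2) K)ˣ) : Matrix (Fin 2) (Fin 2) K)
          = !![q, 1; 0, 1] := rfl
      rw [hval]
      have hp : (q : K) ^ ((m : ℤ) + 1) = q ^ (m : ℤ) * q := zpow_add_one₀ aux_hq0 _
      ext i j
      fin_cases i <;> fin_cases j <;>
        simp [Matrix.mul_apply, Fin.sum_univ_two, qsX, hp, div_eq_mul_inv] <;>
        field_simp [aux_hq0, aux_hq1] <;> ring
  | pred m ih =>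
      have e : σ1 ^ (-(-(m : ℤ) - 1)) = σ1 ^ (-(-(m : ℤ))) * σ1 := by
        rw [← zpow_add_one]; ring_nf
      rw [e, Units.val_mul, ih]
      have hval : ((σ1 : (Matrix (Fin 2) (Fin 2) K)ˣ) : Matrix (Fin 2) (Fin 2) K)
          = !![q⁻¹, -q⁻¹; 0, 1] := rfl
      rw [hval]
      have hp : (q : K) ^ (-(m : ℤ) - 1) = q ^ (-(m : ℤ)) * q⁻¹ := by
        rw [zpow_sub₀ aux_hq0, zpow_one, div_eq_mul_inv]
      ext i j
      fin_cases i <;> fin_cases j <;>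
        simp [Matrix.mul_apply, Fin.sum_univ_two, qsX, hp, div_eq_mul_inv] <;>
        field_simp [aux_hq0, aux_hq1] <;> ring

lemma aux_sigma1_Sq (c : ℤ) :
    ((σ1 ^ (-c) * Sq : (Matrix (Fin 2) (Fin 2) K)ˣ) : Matrix (Fin 2) (Fin 2) K)
      = !![qsX q c, -q ^ (c - 1); 1, 0] := by
  rw [Units.val_mul, aux_sigma1_zpow]
  have hSq : ((Sq : (Matrix (Fin 2) (Fin 2) K)ˣ) : Matrix (Fin 2) (Fin 2) K)
      = !![0, -q⁻¹; 1, 0] := rfl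
  rw [hSq]
  have hp : (q : K) ^ (c - 1) = q ^ c * q⁻¹ := by
    rw [zpow_sub₀ aux_hq0, zpow_one, div_eq_mul_inv]
  ext i j
  fin_cases i <;> fin_cases j <;>
    simp [Matrix.mul_apply, Fin.sum_univ_two, hp] <;> ring

lemma aux_Esharp_cons (c : ℤ) (L : List ℤ) :
    Esharp (c :: L) = qsX q c * Esharp L - q ^ (c - 1) * EsharpD L := by
  cases L with
  | nil => simp [Esharp, EsharpX, EsharpD]
  | cons d rest => simp [Esharp, EsharpX, EsharpD]

/-- the matrix product σ_{1,q}^{-c_1}S_q⋯σ_{1,q}^{-c_k}S_q in terms of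
right q-deformed Euler continuants (with the convention `E^♯_{-1}() = 0`). -/
theorem prodCS_entries (c1 : ℤ) (cs : List ℤ) :
    (prodCS (c1 :: cs) : Matrix (Fin 2) (Fin 2) K)
      = !![Esharp (c1 :: cs),
           -q ^ ((c1 :: cs).getLast! - 1) * Esharp ((c1 :: cs).dropLast);
           Esharp cs,
           -q ^ ((c1 :: cs).getLast! - 1) * EsharpD ((c1 :: cs).dropLast)] := by
  induction cs generalizing c1 with
  | nil =>
      rw [show prodCS [c1] = σ1 ^ (-c1) * Sq * prodCS [] from rfl,
        show prodCS ([] : List ℤ) = 1 from rfl, mul_one, aux_sigma1_Sq]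
      ext i j
      fin_cases i <;> fin_cases j <;>
        simp [Esharp, EsharpX, EsharpD, List.getLast!]
  | cons c2 cs ih =>
      have e : prodCS (c1 :: c2 :: cs) = σ1 ^ (-c1) * Sq * prodCS (c2 :: cs) := rfl
      rw [e, Units.val_mul, aux_sigma1_Sq, ih]
      have hgl : (c1 :: c2 :: cs).getLast! = (c2 :: cs).getLast! := rfl
      have hdl : (c1 :: c2 :: cs).dropLast = c1 :: (c2 :: cs).dropLast := rfl
      rw [hgl, hdl]
      ext i j
      fin_cases i <;> fin_cases j <;>
        simp [Matrix.mul_apply, Fin.sum_univ_two, aux_Esharp_cons, EsharpD] <;> ring
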